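/- Let n > 2 be a natural number. If (K, σ) is a σ-field that is n-algebraically closed but not (n+1)-algebraically closed, then the characteristic p of K is nonzero, and n = (p^{mk} − 1)/(p^k − 1) for some natural numbers m, k with m > 1. -/

import Mathlib

open Polynomial

variable {K : Type*} [Field K]

/-- `skewN σ i a = σ^{i-1}(a)⋯σ(a)·a`, with `skewN σ 0 a = 1`. -/
def skewN (σ : K →+* K) : ℕ → K → K
  | 0, _ => 1
  | i + 1, a => σ (skewN σ i a) * a

/-- Right evaluation of a skew polynomial `P = Σ aᵢ Tⁱ` at `a`: `P(a) = Σ aᵢ Nᵢ(a)`. -/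
noncomputable def skewEval (σ : K →+* K) (P : Polynomial K) (a : K) : K :=
  ∑ i ∈ P.support, P.coeff i * skewN σ i a

/-- Multiplication in the skew polynomial ring `K[T;σ]` (with `T·a = σ(a)·T`),
using `Polynomial K` as the carrier of coefficient sequences. -/
noncomputable def skewMul (σ : K →+* K) (P Q : Polynomial K) : Polynomial K :=
  ∑ i ∈ P.support, ∑ j ∈ Q.support,
    Polynomial.C (P.coeff i * (⇑σ)^[i] (Q.coeff j)) * Polynomial.X ^ (i + j)

universe u

/-- `(K, σ)` is `c`-algebraically closed: every skew polynomial of degree `> 1` with nonzero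
constant term has at least `c` distinct right roots. -/
def CAlgClosed {K : Type u} [Field K] (σ : K →+* K) (c : Cardinal.{u}) : Prop :=
  ∀ P : Polynomial K, 1 < P.natDegree → P.coeff 0 ≠ 0 →
    c ≤ Cardinal.mk {x : K // skewEval σ P x = 0}

section Aux

variable (σ : K →+* K)

lemma skewN_zero (a : K) : skewN σ 0 a = 1 := rfl

lemma skewN_succ (i : ℕ) (a : K) : skewN σ (i + 1) a = σ (skewN σ i a) * a := rfl

lemma skewN_mul (i : ℕ) (a b : K) : skewN σ i (a * b) = skewN σ i a * skewN σ i b := by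
  induction i with
  | zero => simp [skewN_zero]
  | succ i ih => simp only [skewN_succ, ih, map_mul]; ring

lemma iter_add (i : ℕ) (x y : K) : (⇑σ)^[i] (x + y) = (⇑σ)^[i] x + (⇑σ)^[i] y := by
  induction i with
  | zero => simp
  | succ i ih =>
      rw [Function.iterate_succ_apply', Function.iterate_succ_apply',
        Function.iterate_succ_apply', ih, map_add]

lemma iter_conj {z w : K} (hz : σ z = w * z) (i : ℕ) :
    (⇑σ)^[i] z = skewN σ i w * z := by
  induction i with
  | zero => simp [skewN_zero]
  | succ i ih =>
      rw [Function.iterate_succ_apply', ih, map_mul, hz, skewN_succ]; ring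

lemma skewN_conj {t : K} (ht : t ≠ 0) (i : ℕ) :
    skewN σ i (σ t * t⁻¹) = (⇑σ)^[i] t * t⁻¹ := by
  induction i with
  | zero => simp [skewN_zero, mul_inv_cancel₀ ht]
  | succ i ih =>
      rw [skewN_succ, ih, map_mul, map_inv₀, Function.iterate_succ_apply']
      have h1 : σ t ≠ 0 := (map_ne_zero σ).mpr ht
      field_simp

lemma skewEval_range (P : Polynomial K) (x : K) :
    skewEval σ P x = ∑ i ∈ Finset.range (P.natDegree + 1), P.coeff i * skewN σ i x := by
  rw [skewEval]
  refine Finset.sum_subset P.supp_subset_range_natDegree_succ (fun i _ hi => ?_)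
  rw [Polynomial.notMem_support_iff.mp hi, zero_mul]

lemma skewEval_at_zero (P : Polynomial K) : skewEval σ P 0 = P.coeff 0 := by
  rw [skewEval_range]
  rw [Finset.sum_eq_single 0]
  · simp [skewN_zero]
  · intro i _ hi
    obtain ⟨j, rfl⟩ := Nat.exists_eq_succ_of_ne_zero hi
    rw [skewN_succ, mul_zero, mul_zero]
  · intro h
    exact absurd (Finset.mem_range.mpr (Nat.succ_pos _)) h

lemma root_ne_zero {P : Polynomial K} (hc : P.coeff 0 ≠ 0) {x : K}
    (hx : skewEval σ P x = 0) : x ≠ 0 := by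
  rintro rfl
  rw [skewEval_at_zero] at hx
  exact hc hx

lemma skewEval_quad (e f x : K) :
    skewEval σ (X ^ 2 + C e * X + C f) x = σ x * x + e * x + f := by
  have h1 : (X ^ 2 + C e * X + C f : Polynomial K) = C 1 * X ^ 2 + C e * X + C f := by
    simp
  have hd : (X ^ 2 + C e * X + C f : Polynomial K).natDegree = 2 := by
    rw [h1, natDegree_quadratic one_ne_zero]
  rw [skewEval_range, hd]
  rw [Finset.sum_range_succ, Finset.sum_range_succ, Finset.sum_range_succ,
    Finset.sum_range_zero]
  have c0 : (X ^ 2 + C e * X + C f : Polynomial K).coeff 0 = f := by simp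
  have c1 : (X ^ 2 + C e * X + C f : Polynomial K).coeff 1 = e := by simp
  have c2 : (X ^ 2 + C e * X + C f : Polynomial K).coeff 2 = 1 := by simp
  rw [c0, c1, c2]
  simp [skewN_succ, skewN_zero]
  ring

lemma quad_coeff_zero (e f : K) : (X ^ 2 + C e * X + C f : Polynomial K).coeff 0 = f := by
  simp

lemma quad_natDegree (e f : K) : (X ^ 2 + C e * X + C f : Polynomial K).natDegree = 2 := by
  have h1 : (X ^ 2 + C e * X + C f : Polynomial K) = C 1 * X ^ 2 + C e * X + C f := by simp
  rw [h1, natDegree_quadratic one_ne_zero]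

/-- If `a` and `w*a` are roots of `P`, with `σ z = w z`, `σ μ = μ`, then
`σ(μ+z)/(μ+z) · a` is also a root. -/
lemma conj_root (P : Polynomial K) {a w z μ : K}
    (ha : skewEval σ P a = 0) (hwa : skewEval σ P (w * a) = 0)
    (hz : σ z = w * z) (hμ : σ μ = μ) (ht : μ + z ≠ 0) :
    skewEval σ P (σ (μ + z) * (μ + z)⁻¹ * a) = 0 := by
  have hterm : ∀ i : ℕ, P.coeff i * skewN σ i (σ (μ + z) * (μ + z)⁻¹ * a)
      = (μ + z)⁻¹ * (μ * (P.coeff i * skewN σ i a)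
        + z * (P.coeff i * skewN σ i (w * a))) := by
    intro i
    rw [skewN_mul σ i (σ (μ + z) * (μ + z)⁻¹) a, skewN_conj σ ht, skewN_mul σ i w a]
    have hit : (⇑σ)^[i] (μ + z) = μ + skewN σ i w * z := by
      rw [iter_add, Function.iterate_fixed hμ, iter_conj σ hz]
    rw [hit]
    ring
  rw [skewEval_range, Finset.sum_congr rfl (fun i _ => hterm i), ← Finset.mul_sum,
    Finset.sum_add_distrib, ← Finset.mul_sum, ← Finset.mul_sum]
  have h1 : ∑ i ∈ Finset.range (P.natDegree + 1), P.coeff i * skewN σ i a = 0 := by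
    rw [← skewEval_range]; exact ha
  have h2 : ∑ i ∈ Finset.range (P.natDegree + 1), P.coeff i * skewN σ i (w * a) = 0 := by
    rw [← skewEval_range]; exact hwa
  rw [h1, h2]
  ring

/-- Three distinct roots of a quadratic yield a conjugate pair. -/
lemma three_roots_conj {e f r1 r2 r3 : K} (h12 : r1 ≠ r2) (h13 : r1 ≠ r3)
    (hE1 : σ r1 * r1 + e * r1 + f = 0) (hE2 : σ r2 * r2 + e * r2 + f = 0)
    (hE3 : σ r3 * r3 + e * r3 + f = 0) :
    ∃ z : K, z ≠ 0 ∧ σ z * r2 = z * r3 := by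
  have h31 : r3 - r1 ≠ 0 := sub_ne_zero.mpr (Ne.symm h13)
  have h21 : r2 - r1 ≠ 0 := sub_ne_zero.mpr (Ne.symm h12)
  have hσ31 : σ (r3 - r1) ≠ 0 := (map_ne_zero σ).mpr h31
  refine ⟨(r2 - r1) * (r3 - r1)⁻¹, mul_ne_zero h21 (inv_ne_zero h31), ?_⟩
  have hσ31' : σ r3 - σ r1 ≠ 0 := by rwa [map_sub] at hσ31
  have CR : (σ r2 - σ r1) * r2 * (r3 - r1) = (r2 - r1) * r3 * (σ r3 - σ r1) := by
    linear_combination (r2 - r3) * hE1 + (r3 - r1) * hE2 + (r1 - r2) * hE3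
  rw [map_mul, map_inv₀, map_sub, map_sub]
  field_simp
  linear_combination CR

/-- Every root of a quadratic with a nontrivial conjugate pair of roots `a`, `w*a`
is conjugate to `a`, via an element of the form `μ + z` with `μ` fixed. -/
lemma quad_conj {e f a w z x : K} (ha0 : a ≠ 0) (hz0 : z ≠ 0) (hw1 : w ≠ 1)
    (hz : σ z = w * z) (hxa : x ≠ a)
    (hE1 : σ a * a + e * a + f = 0) (hE2 : σ (w * a) * (w * a) + e * (w * a) + f = 0)
    (hE3 : σ x * x + e * x + f = 0) :
    ∃ μ : K, σ μ = μ ∧ μ + z ≠ 0 ∧ σ (μ + z) * a = (μ + z) * x := by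
  have hxa' : x - a ≠ 0 := sub_ne_zero.mpr hxa
  have hσxa : σ x - σ a ≠ 0 := by
    rw [← map_sub]; exact (map_ne_zero σ).mpr hxa'
  have hE2' : σ w * σ a * (w * a) + e * (w * a) + f = 0 := by
    rw [← map_mul]; exact hE2
  obtain ⟨μ, e1⟩ : ∃ μ : K, μ * (x - a) = (w * a - x) * z :=
    ⟨(w * a - x) * z * (x - a)⁻¹, by field_simp⟩
  have e2 : σ μ * (σ x - σ a) = (σ w * σ a - σ x) * (w * z) := by
    have h := congrArg σ e1
    rw [map_mul, map_sub, map_mul, map_sub, map_mul, hz] at h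
    linear_combination h
  have key' : (σ w * σ a - σ x) * (w * z) * (x - a) * a
      = (w * a - x) * z * (σ x - σ a) * a := by
    linear_combination (z * (a * (w - 1) - (x - a))) * hE1 + (z * (x - a)) * hE2'
      + (-(a * z * (w - 1))) * hE3
  have key : (σ w * σ a - σ x) * (w * z) * (x - a) = (w * a - x) * z * (σ x - σ a) :=
    mul_right_cancel₀ ha0 key'
  have hσμ : σ μ = μ := by
    exact mul_right_cancel₀ (mul_ne_zero hσxa hxa')
      (show σ μ * ((σ x - σ a) * (x - a)) = μ * ((σ x - σ a) * (x - a)) by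
        linear_combination (x - a) * e2 + key - (σ x - σ a) * e1)
  refine ⟨μ, hσμ, ?_, ?_⟩
  · intro h
    have hzμ : z = -μ := by linear_combination h
    have hσz : σ z = z := by rw [hzμ, map_neg, hσμ]
    rw [hz] at hσz
    exact hw1 (mul_right_cancel₀ hz0 (hσz.trans (one_mul z).symm))
  · rw [map_add, hσμ, hz]
    linear_combination -e1

/-- The quadratic through two given points. -/
lemma quad_through {a b : K} (hab : a ≠ b) (ha0 : a ≠ 0) (hb0 : b ≠ 0) :
    ∃ e f : K, f ≠ 0 ∧ σ a * a + e * a + f = 0 ∧ σ b * b + e * b + f = 0 := by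
  have hba : b - a ≠ 0 := sub_ne_zero.mpr (Ne.symm hab)
  have hσba : σ (b - a) ≠ 0 := (map_ne_zero σ).mpr hba
  set v : K := σ (b - a) * (b - a)⁻¹ * b with hvdef
  have hv0 : v ≠ 0 := mul_ne_zero (mul_ne_zero hσba (inv_ne_zero hba)) hb0
  refine ⟨-(v + σ a), v * a, mul_ne_zero hv0 ha0, by ring, ?_⟩
  have hv : v * (b - a) = (σ b - σ a) * b := by
    rw [hvdef]
    rw [map_sub]
    field_simp
  linear_combination -hv

/-- The fixed subfield of `σ`. -/
def fixedSubfield (σ : K →+* K) : Subfield K where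
  carrier := {x | σ x = x}
  mul_mem' := fun {a b} ha hb => by
    simp only [Set.mem_setOf_eq, map_mul] at *; rw [ha, hb]
  one_mem' := map_one σ
  add_mem' := fun {a b} ha hb => by
    simp only [Set.mem_setOf_eq, map_add] at *; rw [ha, hb]
  zero_mem' := map_zero σ
  neg_mem' := fun {a} ha => by
    simp only [Set.mem_setOf_eq, map_neg] at *; rw [ha]
  inv_mem' := fun a ha => by
    simp only [Set.mem_setOf_eq, map_inv₀] at *; rw [ha]

lemma mem_fixedSubfield {σ : K →+* K} {x : K} : x ∈ fixedSubfield σ ↔ σ x = x := Iff.rfl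

lemma nat_div_lemma {Q : ℕ} (h : 2 ≤ Q) : (Q ^ 2 - 1) / (Q - 1) = Q + 1 := by
  obtain ⟨m, rfl⟩ : ∃ m, Q = m + 2 := ⟨Q - 2, by omega⟩
  rw [show (m + 2) ^ 2 - 1 = (m + 3) * (m + 1) from by
      have : (m + 2) ^ 2 = (m + 3) * (m + 1) + 1 := by ring
      omega,
    show m + 2 - 1 = m + 1 from by omega,
    Nat.mul_div_cancel _ (by omega : 0 < m + 1)]

end Aux

/-- If `n > 2` and `(K, σ)` is `n`-algebraically closed but not `(n+1)`-algebraically closed,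
then `K` has characteristic `p ≠ 0` and `n = (p^{mk} − 1)/(p^k − 1)` for some naturals
`m, k` with `m > 1` (and `k ≥ 1`). -/
theorem stmt_18 {K : Type u} [Field K] (σ : K →+* K) (n : ℕ) (hn : 2 < n)
    (h1 : CAlgClosed σ (n : Cardinal.{u}))
    (h2 : ¬ CAlgClosed σ ((n : Cardinal.{u}) + 1)) :
    ringChar K ≠ 0 ∧ ∃ m k : ℕ, 1 < m ∧ 1 ≤ k ∧
      n = (ringChar K ^ (m * k) - 1) / (ringChar K ^ k - 1) := by
  classical
  rw [CAlgClosed] at h2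
  push_neg at h2
  obtain ⟨P0, hP0d, hP0c, hP0lt⟩ := h2
  have hge := h1 P0 hP0d hP0c
  have hcard : Cardinal.mk {x : K // skewEval σ P0 x = 0} = n := by
    refine le_antisymm ?_ hge
    have hsucc : ((n : Cardinal) + 1) = Order.succ (n : Cardinal) := by
      rw [← Cardinal.nat_succ, Nat.cast_succ]
    have := hP0lt
    rw [hsucc, Order.lt_succ_iff] at this
    exact this
  have hrne : ∀ x : K, skewEval σ P0 x = 0 → x ≠ 0 := fun x hx => root_ne_zero σ hP0c hx
  -- there exist two distinct conjugate roots of P0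
  have hpair : ∃ a b : K, skewEval σ P0 a = 0 ∧ skewEval σ P0 b = 0 ∧ a ≠ b ∧
      ∃ z : K, z ≠ 0 ∧ σ z * a = z * b := by
    by_contra hcon
    push_neg at hcon
    -- two distinct roots of P0
    have h2le : (2 : Cardinal) ≤ Cardinal.mk {x : K // skewEval σ P0 x = 0} := by
      rw [hcard]
      have : ((2 : ℕ) : Cardinal.{u}) ≤ ((n : ℕ) : Cardinal.{u}) := Nat.cast_le.mpr (by omega)
      simpa using this
    obtain ⟨A, B, hAB⟩ := Cardinal.two_le_iff.mp h2le
    have hA := A.2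
    have hB := B.2
    have hABv : A.1 ≠ B.1 := fun h => hAB (Subtype.ext h)
    obtain ⟨e, f, hf, hQ1, hQ2⟩ := quad_through σ hABv (hrne _ hA) (hrne _ hB)
    have hQn := h1 (X ^ 2 + C e * X + C f)
      (by rw [quad_natDegree]; omega) (by rw [quad_coeff_zero]; exact hf)
    have h3le : (3 : Cardinal) ≤ Cardinal.mk {x : K // skewEval σ (X ^ 2 + C e * X + C f) x = 0} := by
      refine le_trans ?_ hQn
      have : ((3 : ℕ) : Cardinal.{u}) ≤ ((n : ℕ) : Cardinal.{u}) := Nat.cast_le.mpr (by omega)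
      simpa using this
    obtain ⟨R1, R2, hR12⟩ := Cardinal.two_le_iff.mp (le_trans (by norm_num) h3le)
    obtain ⟨R3, hR31, hR32⟩ := Cardinal.three_le h3le R1 R2
    have hq : ∀ x : {x : K // skewEval σ (X ^ 2 + C e * X + C f) x = 0},
        σ x.1 * x.1 + e * x.1 + f = 0 := fun x => by
      have := x.2; rwa [skewEval_quad] at this
    have hroot0 : ∀ x : {x : K // skewEval σ (X ^ 2 + C e * X + C f) x = 0}, x.1 ≠ 0 :=
      fun x => root_ne_zero σ (by rwa [quad_coeff_zero]) x.2
    have h12 : R1.1 ≠ R2.1 := fun h => hR12 (Subtype.ext h)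
    have h13 : R1.1 ≠ R3.1 := fun h => hR31 (Subtype.ext h.symm)
    have h23 : R2.1 ≠ R3.1 := fun h => hR32 (Subtype.ext h.symm)
    obtain ⟨z, hz0, hzr⟩ := three_roots_conj σ h12 h13 (hq R1) (hq R2) (hq R3)
    have hz0' : σ z ≠ 0 := (map_ne_zero σ).mpr hz0
    set w : K := σ z * z⁻¹ with hwdef
    have hzw : σ z = w * z := by rw [hwdef]; field_simp
    have hr3w : R3.1 = w * R2.1 := by
      rw [hwdef]
      field_simp
      linear_combination -hzr
    have hw1 : w ≠ 1 := by
      intro h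
      rw [h, one_mul] at hr3w
      exact h23 hr3w.symm
    have hE2w : σ (w * R2.1) * (w * R2.1) + e * (w * R2.1) + f = 0 := by
      rw [← hr3w]; exact hq R3
    -- both A.1 and B.1 are conjugate to R2.1
    have conjto : ∀ x : K, σ x * x + e * x + f = 0 →
        ∃ t : K, t ≠ 0 ∧ σ t * R2.1 = t * x := by
      intro x hx
      by_cases h : x = R2.1
      · exact ⟨1, one_ne_zero, by rw [map_one, one_mul, one_mul, h]⟩
      · obtain ⟨μ, hμ, ht0, hteq⟩ := quad_conj σ (hroot0 R2) hz0 hw1 hzw h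
          (hq R2) hE2w hx
        exact ⟨μ + z, ht0, hteq⟩
    obtain ⟨t1, ht1, he1⟩ := conjto A.1 hQ1
    obtain ⟨t2, ht2, he2⟩ := conjto B.1 hQ2
    have hσt1 : σ t1 ≠ 0 := (map_ne_zero σ).mpr ht1
    refine hcon A.1 B.1 hA hB hABv (t2 * t1⁻¹)
      (mul_ne_zero ht2 (inv_ne_zero ht1)) ?_
    rw [map_mul, map_inv₀]
    field_simp
    linear_combination σ t1 * he2 - σ t2 * he1
  -- CASE A: use the conjugate pair to build a projective line over the fixed field
  obtain ⟨a, b, ha, hb, hab, z0, hz00, hzab⟩ := hpair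
  have ha0 : a ≠ 0 := hrne a ha
  have hb0 : b ≠ 0 := hrne b hb
  have hσz0 : σ z0 ≠ 0 := (map_ne_zero σ).mpr hz00
  set w : K := σ z0 * z0⁻¹ with hwdef
  have hzw : σ z0 = w * z0 := by rw [hwdef]; field_simp
  have hbw : b = w * a := by
    rw [hwdef]
    field_simp
    linear_combination -hzab
  have hw1 : w ≠ 1 := by
    intro h
    rw [h, one_mul] at hbw
    exact hab hbw.symm
  have hwa : skewEval σ P0 (w * a) = 0 := by rw [← hbw]; exact hb
  set F : Subfield K := fixedSubfield σ with hFdef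
  have hmem : ∀ μ : ↥F, σ (μ : K) = (μ : K) := fun μ => μ.2
  have htne : ∀ μ : K, σ μ = μ → μ + z0 ≠ 0 := by
    intro μ hμ h
    have hzμ : z0 = -μ := by linear_combination h
    have hσz : σ z0 = z0 := by rw [hzμ, map_neg, hμ]
    rw [hzw] at hσz
    exact hw1 (mul_right_cancel₀ hz00 (hσz.trans (one_mul z0).symm))
  have hfix_ne : ∀ μ : K, σ μ = μ → σ (μ + z0) ≠ μ + z0 := by
    intro μ hμ h
    rw [map_add, hμ, hzw] at h
    have : w * z0 = z0 := by linear_combination h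
    exact hw1 (mul_right_cancel₀ hz00 (this.trans (one_mul z0).symm))
  -- the point of the projective line attached to μ
  have hptinj : ∀ μ μ' : K, σ μ = μ → σ μ' = μ' →
      σ (μ + z0) * (μ + z0)⁻¹ * a = σ (μ' + z0) * (μ' + z0)⁻¹ * a → μ = μ' := by
    intro μ μ' hμ hμ' h
    have ht : μ + z0 ≠ 0 := htne μ hμ
    have ht' : μ' + z0 ≠ 0 := htne μ' hμ'
    have h1 : σ (μ + z0) * (μ + z0)⁻¹ = σ (μ' + z0) * (μ' + z0)⁻¹ :=
      mul_right_cancel₀ ha0 h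
    field_simp at h1
    rw [map_add, map_add, hμ, hμ', hzw] at h1
    have h3 : z0 * (1 - w) * (μ - μ') = 0 := by linear_combination h1
    have h4 : (1 - w) ≠ 0 := sub_ne_zero.mpr (Ne.symm hw1)
    have := mul_eq_zero.mp h3
    rcases this with h5 | h5
    · exact absurd (mul_eq_zero.mp h5) (by simp [hz00, h4])
    · linear_combination h5
  have hptne : ∀ μ : K, σ μ = μ → σ (μ + z0) * (μ + z0)⁻¹ * a ≠ a := by
    intro μ hμ h
    have ht : μ + z0 ≠ 0 := htne μ hμ
    have h1 : σ (μ + z0) * (μ + z0)⁻¹ = 1 := by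
      have := mul_right_cancel₀ ha0 (h.trans (one_mul a).symm)
      exact this
    have h2 : σ (μ + z0) = μ + z0 := by
      field_simp at h1
      rw [map_add] at h1 ⊢
      linear_combination h1
    exact hfix_ne μ hμ h2
  -- lower bound : an injection from Option F into the roots of P0
  have hinjF : Cardinal.mk (↥F) + 1 ≤ (n : Cardinal.{u}) := by
    rw [← Cardinal.mk_option, ← hcard]
    refine Cardinal.mk_le_of_injective (f := fun o : Option ↥F =>
      (Option.elim o ⟨a, ha⟩ (fun μ => ⟨σ ((μ : K) + z0) * ((μ : K) + z0)⁻¹ * a,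
        conj_root σ P0 ha hwa hzw (hmem μ) (htne _ (hmem μ))⟩)
        : {x : K // skewEval σ P0 x = 0})) ?_
    rintro (_ | μ1) (_ | μ2) h
    · rfl
    · exact absurd (congrArg Subtype.val h).symm (hptne _ (hmem μ2))
    · exact absurd (congrArg Subtype.val h) (hptne _ (hmem μ1))
    · have := hptinj _ _ (hmem μ1) (hmem μ2) (congrArg Subtype.val h)
      exact congrArg some (Subtype.ext this)
  -- upper bound : a surjection from Option F onto the roots of the quadratic through a, b
  obtain ⟨e, f, hf, hQa, hQb⟩ := quad_through σ hab ha0 hb0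
  have hQwa : σ (w * a) * (w * a) + e * (w * a) + f = 0 := by rw [← hbw]; exact hQb
  have hQn := h1 (X ^ 2 + C e * X + C f)
    (by rw [quad_natDegree]; omega) (by rw [quad_coeff_zero]; exact hf)
  have hQroot : ∀ μ : ↥F, skewEval σ (X ^ 2 + C e * X + C f)
      (σ ((μ : K) + z0) * ((μ : K) + z0)⁻¹ * a) = 0 := by
    intro μ
    refine conj_root σ _ ?_ ?_ hzw (hmem μ) (htne _ (hmem μ))
    · rw [skewEval_quad]; exact hQa
    · rw [skewEval_quad]; exact hQwa
  have hsurjF : (n : Cardinal.{u}) ≤ Cardinal.mk (↥F) + 1 := by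
    rw [← Cardinal.mk_option]
    refine le_trans hQn (Cardinal.mk_le_of_surjective (f := fun o : Option ↥F =>
      (Option.elim o ⟨a, by rw [skewEval_quad]; exact hQa⟩
        (fun μ => ⟨σ ((μ : K) + z0) * ((μ : K) + z0)⁻¹ * a, hQroot μ⟩)
        : {x : K // skewEval σ (X ^ 2 + C e * X + C f) x = 0})) ?_)
    rintro ⟨x, hx⟩
    rw [skewEval_quad] at hx
    by_cases hxa : x = a
    · exact ⟨none, Subtype.ext hxa.symm⟩
    · obtain ⟨μ, hμ, ht0, hteq⟩ := quad_conj σ ha0 hz00 hw1 hzw hxa hQa hQwa hx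
      refine ⟨some ⟨μ, hμ⟩, Subtype.ext ?_⟩
      show σ (μ + z0) * (μ + z0)⁻¹ * a = x
      rw [map_add] at hteq ⊢
      field_simp
      linear_combination hteq
  have hFn : Cardinal.mk (↥F) + 1 = (n : Cardinal.{u}) := le_antisymm hinjF hsurjF
  -- F is finite
  have hFlt : Cardinal.mk (↥F) < Cardinal.aleph0 := by
    refine lt_of_le_of_lt (le_trans ?_ (le_of_eq hFn)) (Cardinal.nat_lt_aleph0 n)
    exact le_add_right (le_refl _)
  haveI hFfin : Finite ↥F := Cardinal.lt_aleph0_iff_finite.mp hFlt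
  haveI : Fintype ↥F := Fintype.ofFinite _
  have hqn : Fintype.card ↥F + 1 = n := by
    have : ((Fintype.card ↥F + 1 : ℕ) : Cardinal.{u}) = ((n : ℕ) : Cardinal.{u}) := by
      push_cast
      rw [← Cardinal.mk_fintype]
      exact hFn
    exact_mod_cast this
  -- characteristic
  set p : ℕ := ringChar ↥F with hpdef
  haveI hcp : CharP ↥F p := ringChar.charP _
  haveI : CharP K p := charP_of_injective_ringHom F.subtype.injective p
  have hpK : ringChar K = p := ringChar.eq K p
  obtain ⟨k, hp_prime, hcardF⟩ := FiniteField.card ↥F p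
  have hQ2 : 2 ≤ p ^ (k : ℕ) := by
    calc 2 = 2 ^ 1 := by norm_num
    _ ≤ 2 ^ (k : ℕ) := Nat.pow_le_pow_right (by norm_num) k.one_le
    _ ≤ p ^ (k : ℕ) := Nat.pow_le_pow_left hp_prime.two_le _
  refine ⟨by rw [hpK]; exact hp_prime.ne_zero, 2, (k : ℕ), one_lt_two, k.one_le, ?_⟩
  rw [hpK]
  have hpow : p ^ (2 * (k : ℕ)) = (p ^ (k : ℕ)) ^ 2 := by
    rw [mul_comm, pow_mul]
  rw [hpow, nat_div_lemma hQ2]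
  omega
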